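/- Let M be a simple matroid such that every connected component of M is either a coloop or an iterated parallel connection of uniform matroids of the form U_{m,m+1} with m ≥ 2. Then there exists a linear ordering < of the ground set of M such that the broken circuit complex BC(M,<) is a complete intersection complex, i.e., the minimal broken circuits of (M,<) are pairwise disjoint. -/

import Mathlib

open Set Polynomial Matroid CategoryTheory

universe u

namespace PaperBC

variable {α : Type*}

/-- A circuit of a matroid: a minimal dependent subset of the ground set. -/
def MCircuit (M : Matroid α) (C : Set α) : Prop :=
  ¬ M.Indep C ∧ C ⊆ M.E ∧ ∀ D, D ⊂ C → M.Indep D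

/-- A broken circuit with respect to an order relation `r` (to be read as `≤`):
a circuit with its least element removed. -/
def BrokenCircuit (r : α → α → Prop) (M : Matroid α) (B : Set α) : Prop :=
  ∃ C e, MCircuit M C ∧ e ∈ C ∧ (∀ x ∈ C, r e x) ∧ B = C \ {e}

/-- The broken circuit complex: subsets of the ground set containing no broken circuit. -/
def BCC (r : α → α → Prop) (M : Matroid α) : Set (Set α) :=
  {F | F ⊆ M.E ∧ ∀ B, BrokenCircuit r M B → ¬ B ⊆ F}

/-- The independence (matroid) complex. -/
def IndepComplex (M : Matroid α) : Set (Set α) := {F | M.Indep F}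

/-- The link of a face in a complex. -/
def linkOf (Δ : Set (Set α)) (F : Set α) : Set (Set α) :=
  {G | F ∪ G ∈ Δ ∧ Disjoint F G}

/-- Vertex set of a complex. -/
def vertexSet (Δ : Set (Set α)) : Set α := {v | {v} ∈ Δ}

def dimLE (Δ : Set (Set α)) (d : ℕ) : Prop := ∀ s ∈ Δ, s.ncard ≤ d + 1

def dimEq (Δ : Set (Set α)) (d : ℕ) : Prop := dimLE Δ d ∧ ∃ s ∈ Δ, s.ncard = d + 1

/-- `Δ` is an `n`-gon (cycle) as a 1-dimensional complex. -/
def IsNGon (Δ : Set (Set α)) (n : ℕ) : Prop :=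
  3 ≤ n ∧ ∃ v : ℕ → α, (∀ i j, i < n → j < n → v i = v j → i = j) ∧
    Δ = {s | s = ∅ ∨ (∃ i < n, s = {v i}) ∨ ∃ i < n, s = {v i, v ((i + 1) % n)}}

/-- `Δ` is a path on `m` vertices as a simplicial complex. -/
def IsPathComplex (Δ : Set (Set α)) (m : ℕ) : Prop :=
  1 ≤ m ∧ ∃ v : ℕ → α, (∀ i j, i < m → j < m → v i = v j → i = j) ∧
    Δ = {s | s = ∅ ∨ (∃ i < m, s = {v i}) ∨ ∃ i, i + 1 < m ∧ s = {v i, v (i + 1)}}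

/-- The h-polynomial `h(t) = f(t-1)` of a complex with prescribed rank `r`,
where `f(t) = ∑ fᵢ t^{r-i}`. -/
noncomputable def hPoly (Δ : Set (Set α)) (r : ℕ) : Polynomial ℤ :=
  ∑ i ∈ Finset.range (r + 1),
    Polynomial.C (({s ∈ Δ | s.ncard = i}.ncard : ℤ)) * (X - 1) ^ (r - i)

/-- The `i`-th entry of the h-vector: the coefficient of `t^{r-i}` in the h-polynomial. -/
noncomputable def hVec (Δ : Set (Set α)) (r i : ℕ) : ℤ := (hPoly Δ r).coeff (r - i)

/-- The rank of a matroid, as the cardinality of some base. -/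
noncomputable def rk (M : Matroid α) : ℕ := M.exists_isBase.choose.ncard

/-- A simple matroid: every circuit has at least 3 elements. -/
def MSimple (M : Matroid α) : Prop := ∀ C, MCircuit M C → 3 ≤ C.ncard

/-- A connected matroid: any two distinct elements lie on a common circuit. -/
def MConnected (M : Matroid α) : Prop :=
  M.E.Nonempty ∧ ∀ e ∈ M.E, ∀ f ∈ M.E, e ≠ f → ∃ C, MCircuit M C ∧ e ∈ C ∧ f ∈ C

def MLoop (M : Matroid α) (e : α) : Prop := e ∈ M.E ∧ ¬ M.Indep {e}

def MColoop (M : Matroid α) (e : α) : Prop := e ∈ M.E ∧ ∀ B, M.IsBase B → e ∈ B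

/-- `M` is the parallel connection of `M₁` and `M₂` relative to `e`,
characterized by its set of circuits. -/
def IsParallelConn (M M₁ M₂ : Matroid α) (e : α) : Prop :=
  M₁.E ∩ M₂.E = {e} ∧ M.E = M₁.E ∪ M₂.E ∧
  ¬ MLoop M₁ e ∧ ¬ MColoop M₁ e ∧ ¬ MLoop M₂ e ∧ ¬ MColoop M₂ e ∧
  ∀ C, MCircuit M C ↔ (MCircuit M₁ C ∨ MCircuit M₂ C ∨
    ∃ C₁ C₂, MCircuit M₁ C₁ ∧ MCircuit M₂ C₂ ∧ e ∈ C₁ ∧ e ∈ C₂ ∧ C = (C₁ ∪ C₂) \ {e})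

/-- `M` is the series connection of `M₁` and `M₂` relative to `e`,
characterized by its set of circuits. -/
def IsSeriesConn (M M₁ M₂ : Matroid α) (e : α) : Prop :=
  M₁.E ∩ M₂.E = {e} ∧ M.E = M₁.E ∪ M₂.E ∧
  ¬ MLoop M₁ e ∧ ¬ MColoop M₁ e ∧ ¬ MLoop M₂ e ∧ ¬ MColoop M₂ e ∧
  ∀ C, MCircuit M C ↔ ((MCircuit M₁ C ∧ e ∉ C) ∨ (MCircuit M₂ C ∧ e ∉ C) ∨
    ∃ C₁ C₂, MCircuit M₁ C₁ ∧ MCircuit M₂ C₂ ∧ e ∈ C₁ ∧ e ∈ C₂ ∧ C = C₁ ∪ C₂)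

/-- Contraction of a single element, via duality: `M/e = (M* − e)*`. -/
noncomputable def contractElem (M : Matroid α) (e : α) : Matroid α :=
  (M✶ ↾ (M.E \ {e}))✶

/-- `N` is a simplification of `M`: a simple restriction of `M` to a set meeting
every parallel class of non-loops. -/
def IsSimplificationOf (N M : Matroid α) : Prop :=
  ∃ S ⊆ M.E, N = M ↾ S ∧ MSimple N ∧
    ∀ x ∈ M.E, M.Indep {x} → ∃ y ∈ S, x = y ∨ MCircuit M {x, y}

/-- `M` is (a copy of) the uniform matroid `U_{m,m+1}`. -/
def IsUnifNearCircuit (M : Matroid α) (m : ℕ) : Prop :=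
  M.E.ncard = m + 1 ∧ ∀ I, M.Indep I ↔ I ⊆ M.E ∧ I.ncard ≤ m

/-- The minimal broken circuits of an ordered matroid. -/
def MinBrokenCircuit (r : α → α → Prop) (M : Matroid α) (B : Set α) : Prop :=
  BrokenCircuit r M B ∧ ∀ B', BrokenCircuit r M B' → B' ⊆ B → B' = B

/-- A (nonempty) connected component of a matroid: a circuit-closed subset of the
ground set on which the restriction is connected. -/
def IsComponent (M : Matroid α) (S : Set α) : Prop :=
  S ⊆ M.E ∧ S.Nonempty ∧ MConnected (M ↾ S) ∧
    ∀ C, MCircuit M C → C ⊆ S ∨ Disjoint C S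

/-- Series-parallel networks: matroids obtained from a two-element circuit by
iterated series and parallel connections. -/
inductive IsSPNetwork : Matroid α → Prop
  | twoCircuit (M : Matroid α) (h1 : M.E.ncard = 2) (h2 : MCircuit M M.E) : IsSPNetwork M
  | series (M N P : Matroid α) (e : α) (h1 : P.E.ncard = 2) (h2 : MCircuit P P.E)
      (hN : IsSPNetwork N) (h : IsSeriesConn M N P e) : IsSPNetwork M
  | parallel (M N P : Matroid α) (e : α) (h1 : P.E.ncard = 2) (h2 : MCircuit P P.E)
      (hN : IsSPNetwork N) (h : IsParallelConn M N P e) : IsSPNetwork M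

/-- Iterated parallel connections of uniform matroids `U_{m,m+1}`, `m ≥ 2`. -/
inductive IsIterParallelUnif : Matroid α → Prop
  | unif (M : Matroid α) (m : ℕ) (h2 : 2 ≤ m) (h : IsUnifNearCircuit M m) :
      IsIterParallelUnif M
  | parallel (M N P : Matroid α) (e : α) (m : ℕ) (h2 : 2 ≤ m)
      (hN : IsIterParallelUnif N) (hP : IsUnifNearCircuit P m)
      (h : IsParallelConn M N P e) : IsIterParallelUnif M

/-- `M` is graphic: its circuits are the edge sets of cycles of some graph. -/
def IsGraphic (M : Matroid α) : Prop :=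
  ∃ (V : Type) (G : SimpleGraph V) (f : α → Sym2 V),
    Set.InjOn f M.E ∧ (∀ a ∈ M.E, f a ∈ G.edgeSet) ∧
    ∀ C, MCircuit M C ↔ C ⊆ M.E ∧
      ∃ (u : V) (w : G.Walk u u), w.IsCycle ∧ f '' C = {x | x ∈ w.edges}

/-- A minimal non-face of a complex. -/
def MinNonFace (Δ : Set (Set α)) (s : Set α) : Prop :=
  s ⊆ vertexSet Δ ∧ s ∉ Δ ∧ ∀ t, t ⊂ s → t ∈ Δ

/-- A complete intersection complex: the minimal non-faces are pairwise disjoint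
(equivalently, the Stanley–Reisner ring is a complete intersection). -/
def IsCIComplex (Δ : Set (Set α)) : Prop :=
  ∀ s t, MinNonFace Δ s → MinNonFace Δ t → s ≠ t → Disjoint s t

/-- The Stanley–Reisner ring of a complex over a field `K`. -/
abbrev SRRing (K : Type) [Field K] (Δ : Set (Set α)) :=
  MvPolynomial (vertexSet Δ) K ⧸ (Ideal.span
    {m : MvPolynomial (vertexSet Δ) K | ∃ s : Finset (vertexSet Δ),
      (Subtype.val '' (s : Set (vertexSet Δ))) ∉ Δ ∧ m = ∏ i ∈ s, MvPolynomial.X i})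

/-- A Gorenstein ring: Noetherian with finite self-injective dimension
(expressed by eventual vanishing of `Ext^i(—, R)`). -/
def IsGorensteinRing (R : Type u) [CommRing R] : Prop :=
  IsNoetherianRing R ∧ ∃ n : ℕ, ∀ (M : ModuleCat.{u} R) (i : ℕ), n < i →
    Subsingleton (((Ext R (ModuleCat.{u} R) i).obj (Opposite.op M)).obj (ModuleCat.of R R))




lemma MCircuit.nonempty {M : Matroid α} {C : Set α} (h : MCircuit M C) : C.Nonempty := by
  rcases C.eq_empty_or_nonempty with rfl | h'
  · exact absurd M.empty_indep h.1
  · exact h'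

lemma MCircuit.finite {M : Matroid α} (hE : M.E.Finite) {C : Set α} (h : MCircuit M C) :
    C.Finite := hE.subset h.2.1

lemma MCircuit.diff_singleton_indep {M : Matroid α} {C : Set α} (h : MCircuit M C) {x : α}
    (hx : x ∈ C) : M.Indep (C \ {x}) :=
  h.2.2 _ (sdiff_singleton_ssubset.2 hx)

lemma MCircuit.eq_of_subset {M : Matroid α} {C C' : Set α} (h : MCircuit M C)
    (h' : MCircuit M C') (hss : C' ⊆ C) : C' = C := by
  by_contra hne
  exact h'.1 (h.2.2 _ (hss.ssubset_of_ne hne))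

/-- Every dependent set contains a circuit (needs finiteness). -/
lemma exists_mcircuit_of_dep_aux (M : Matroid α) :
    ∀ n (C : Set α), C.ncard ≤ n → C.Finite → C ⊆ M.E → ¬ M.Indep C →
      ∃ C', C' ⊆ C ∧ MCircuit M C' := by
  intro n
  induction n with
  | zero =>
    intro C hn hfin hCE hdep
    rw [Nat.le_zero, Set.ncard_eq_zero hfin] at hn
    exact absurd (hn ▸ M.empty_indep) hdep
  | succ n ih =>
    intro C hn hfin hCE hdep
    by_cases hmin : ∀ D, D ⊂ C → M.Indep D
    · exact ⟨C, Subset.rfl, hdep, hCE, hmin⟩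
    · push_neg at hmin
      obtain ⟨D, hDC, hDdep⟩ := hmin
      have hlt : D.ncard < C.ncard := Set.ncard_lt_ncard hDC hfin
      obtain ⟨C', hC'D, hC'⟩ := ih D (by omega)
        (hfin.subset hDC.subset) (hDC.subset.trans hCE) hDdep
      exact ⟨C', hC'D.trans hDC.subset, hC'⟩


lemma exists_mcircuit_of_dep {M : Matroid α} {C : Set α} (hfin : C.Finite) (hCE : C ⊆ M.E)
    (hdep : ¬ M.Indep C) : ∃ C', C' ⊆ C ∧ MCircuit M C' :=
  exists_mcircuit_of_dep_aux M C.ncard C le_rfl hfin hCE hdep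

lemma MCircuit.mem_closure_diff {M : Matroid α} {C : Set α} (h : MCircuit M C) {x : α}
    (hx : x ∈ C) : x ∈ M.closure (C \ {x}) := by
  have hI : M.Indep (C \ {x}) := h.diff_singleton_indep hx
  rw [hI.mem_closure_iff_of_notMem (by simp)]
  have : insert x (C \ {x}) = C := by
    rw [insert_diff_singleton, insert_eq_of_mem hx]
  rw [this]
  exact ⟨h.1, h.2.1⟩

/-- Strong circuit elimination. -/
lemma strong_elimination {M : Matroid α} (hE : M.E.Finite) {C₁ C₂ : Set α} {x f : α}
    (h₁ : MCircuit M C₁) (h₂ : MCircuit M C₂) (hx : x ∈ C₁ ∩ C₂) (hf : f ∈ C₁ \ C₂) :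
    ∃ D, MCircuit M D ∧ f ∈ D ∧ D ⊆ (C₁ ∪ C₂) \ {x} := by
  set Z : Set α := (C₁ ∪ C₂) \ {x, f} with hZ
  have hZE : Z ⊆ M.E := (diff_subset).trans (union_subset h₁.2.1 h₂.2.1)
  have hxZ : x ∈ M.closure Z := by
    refine mem_of_mem_of_subset (h₂.mem_closure_diff hx.2) (M.closure_subset_closure ?_)
    intro y hy
    exact ⟨Or.inr hy.1, by rintro (rfl | rfl); exact hy.2 rfl; exact hf.2 hy.1⟩
  have hfZ : f ∈ M.closure Z := by
    have h1 : C₁ \ {f} ⊆ insert x Z := by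
      intro y hy
      by_cases hyx : y = x
      · exact hyx ▸ mem_insert _ _
      · exact Or.inr ⟨Or.inl hy.1, by rintro (rfl | rfl); exact hyx rfl; exact hy.2 rfl⟩
    have h2 : insert x Z ⊆ M.closure Z := insert_subset hxZ (M.subset_closure Z hZE)
    refine mem_of_mem_of_subset (h₁.mem_closure_diff hf.1) ?_
    calc M.closure (C₁ \ {f}) ⊆ M.closure (M.closure Z) :=
          M.closure_subset_closure (h1.trans h2)
      _ = M.closure Z := M.closure_closure Z
  obtain ⟨I, hI⟩ := M.exists_isBasis Z hZE
  have hfI : f ∈ M.closure I := by rwa [hI.closure_eq_closure]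
  have hfnI : f ∉ I := fun hfi => (hI.subset hfi).2 (by simp)
  have hdep : ¬ M.Indep (insert f I) := by
    intro hind
    rw [hI.indep.insert_indep_iff_of_notMem hfnI] at hind
    exact hind.2 hfI
  obtain ⟨D, hDsub, hD⟩ := exists_mcircuit_of_dep
    ((hE.subset hZE).subset hI.subset |>.insert f)
    (insert_subset (h₁.2.1 hf.1) hI.indep.subset_ground) hdep
  refine ⟨D, hD, ?_, ?_⟩
  · by_contra hfD
    have : D ⊆ I := fun y hy => (hDsub hy).resolve_left (fun h => hfD (h ▸ hy))
    exact hD.1 (hI.indep.subset this)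
  · refine hDsub.trans (insert_subset ⟨Or.inl hf.1, fun h => hf.2 (mem_singleton_iff.1 h ▸ hx.2)⟩
      ((hI.subset.trans ?_)))
    intro y hy
    exact ⟨hy.1, fun h => hy.2 (Or.inl h)⟩


def Conn (M : Matroid α) (e f : α) : Prop :=
  e = f ∨ ∃ C, MCircuit M C ∧ e ∈ C ∧ f ∈ C

lemma Conn.symm {M : Matroid α} {e f : α} (h : Conn M e f) : Conn M f e := by
  rcases h with rfl | ⟨C, hC, he, hf⟩
  · exact Or.inl rfl
  · exact Or.inr ⟨C, hC, hf, he⟩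

lemma conn_trans {M : Matroid α} (hE : M.E.Finite) {e f g : α}
    (h1 : Conn M e f) (h2 : Conn M f g) : Conn M e g := by
  rcases h1 with rfl | ⟨C₁, hC₁, he₁, hf₁⟩
  · exact h2
  rcases h2 with rfl | ⟨C₂, hC₂, hf₂, hg₂⟩
  · exact Or.inr ⟨C₁, hC₁, he₁, hf₁⟩
  by_contra hcon
  rw [Conn] at hcon
  push_neg at hcon
  obtain ⟨hne, hcon⟩ := hcon
  -- the set of possible union-cardinalities of connecting pairs
  set T : Set ℕ := {n | ∃ D₁ D₂, MCircuit M D₁ ∧ MCircuit M D₂ ∧ e ∈ D₁ ∧ g ∈ D₂ ∧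
    (D₁ ∩ D₂).Nonempty ∧ n = (D₁ ∪ D₂).ncard} with hT
  have hTne : T.Nonempty := ⟨(C₁ ∪ C₂).ncard, C₁, C₂, hC₁, hC₂, he₁, hg₂, ⟨f, hf₁, hf₂⟩, rfl⟩
  obtain ⟨D₁, D₂, hD₁, hD₂, heD₁, hgD₂, ⟨h0, hh⟩, hcard⟩ := Nat.sInf_mem hTne
  -- e ∉ D₂, g ∉ D₁
  have heD₂ : e ∉ D₂ := fun h => hcon D₂ hD₂ h hgD₂
  have hgD₁ : g ∉ D₁ := fun h => hcon D₁ hD₁ heD₁ h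
  -- apply strong elimination to get C₃ ∋ e avoiding h0
  obtain ⟨C₃, hC₃, heC₃, hC₃sub⟩ := strong_elimination hE hD₁ hD₂ hh ⟨heD₁, heD₂⟩
  have hgC₃ : g ∉ C₃ := fun h => hcon C₃ hC₃ heC₃ h
  -- C₃ meets D₂ \ D₁
  have hC₃D₁ : ¬ C₃ ⊆ D₁ := by
    intro hss
    have : C₃ = D₁ := hD₁.eq_of_subset hC₃ hss
    exact (hC₃sub (this ▸ hh.1)).2 rfl
  obtain ⟨x, hxC₃, hxD₁⟩ := not_subset.1 hC₃D₁
  have hxD₂ : x ∈ D₂ := ((hC₃sub hxC₃).1.resolve_left hxD₁)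
  -- apply strong elimination to (D₂, C₃) with common x, removing g's witness
  obtain ⟨C₄, hC₄, hgC₄, hC₄sub⟩ := strong_elimination hE hD₂ hC₃ ⟨hxD₂, hxC₃⟩ ⟨hgD₂, hgC₃⟩
  -- C₄ meets D₁
  have hC₄D₂ : ¬ C₄ ⊆ D₂ := by
    intro hss
    have : C₄ = D₂ := hD₂.eq_of_subset hC₄ hss
    exact (hC₄sub (this ▸ hxD₂)).2 rfl
  obtain ⟨y, hyC₄, hyD₂⟩ := not_subset.1 hC₄D₂
  have hyD₁ : y ∈ D₁ := by
    have : y ∈ C₃ := ((hC₄sub hyC₄).1.resolve_left hyD₂)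
    exact ((hC₃sub this).1.resolve_right hyD₂)
  -- the new pair (D₁, C₄) has strictly smaller union
  have hsub : D₁ ∪ C₄ ⊆ (D₁ ∪ D₂) \ {x} := by
    intro z hz
    rcases hz with hz | hz
    · exact ⟨Or.inl hz, fun h => hxD₁ (mem_singleton_iff.1 h ▸ hz)⟩
    · have := hC₄sub hz
      rcases this.1 with h | h
      · exact ⟨Or.inr h, this.2⟩
      · exact ⟨(hC₃sub h).1, fun hzz => (this.2 (by
          rcases hzz with rfl; rfl))⟩
  have hlt : (D₁ ∪ C₄).ncard < (D₁ ∪ D₂).ncard := by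
    refine Set.ncard_lt_ncard (hsub.trans_ssubset ?_) (hE.subset (union_subset hD₁.2.1 hD₂.2.1))
    exact sdiff_singleton_ssubset.2 (Or.inr hxD₂)
  have hmem : (D₁ ∪ C₄).ncard ∈ T := ⟨D₁, C₄, hD₁, hC₄, heD₁, hgC₄, ⟨y, hyD₁, hyC₄⟩, rfl⟩
  have := Nat.sInf_le hmem
  omega




lemma restrict_mcircuit_iff {M : Matroid α} {S C : Set α} (hS : S ⊆ M.E) :
    MCircuit (M ↾ S) C ↔ MCircuit M C ∧ C ⊆ S := by
  constructor
  · rintro ⟨hdep, hCE, hmin⟩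
    rw [Matroid.restrict_ground_eq] at hCE
    refine ⟨⟨fun hind => hdep (Matroid.restrict_indep_iff.2 ⟨hind, hCE⟩), hCE.trans hS, ?_⟩, hCE⟩
    intro D hD
    exact (Matroid.restrict_indep_iff.1 (hmin D hD)).1
  · rintro ⟨⟨hdep, hCE, hmin⟩, hCS⟩
    refine ⟨fun hind => hdep (Matroid.restrict_indep_iff.1 hind).1, ?_, ?_⟩
    · rwa [Matroid.restrict_ground_eq]
    · intro D hD
      exact Matroid.restrict_indep_iff.2 ⟨hmin D hD, (hD.subset.trans hCS)⟩

/-- The connectivity class of an element lying on a circuit is a component. -/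
lemma isComponent_class {M : Matroid α} (hE : M.E.Finite) {e : α}
    {C₀ : Set α} (hC₀ : MCircuit M C₀) (heC₀ : e ∈ C₀) :
    IsComponent M {f | f ∈ M.E ∧ Conn M e f} := by
  set S : Set α := {f | f ∈ M.E ∧ Conn M e f} with hSdef
  have heE : e ∈ M.E := hC₀.2.1 heC₀
  have heS : e ∈ S := ⟨heE, Or.inl rfl⟩
  have hSE : S ⊆ M.E := fun x hx => hx.1
  -- circuit closure property
  have hclosed : ∀ C, MCircuit M C → ¬ Disjoint C S → C ⊆ S := by
    intro C hC hdis
    obtain ⟨y, hyC, hyS⟩ := Set.not_disjoint_iff.1 hdis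
    intro z hzC
    refine ⟨hC.2.1 hzC, conn_trans hE hyS.2 (Or.inr ⟨C, hC, hyC, hzC⟩)⟩
  refine ⟨hSE, ⟨e, heS⟩, ⟨?_, ?_⟩, fun C hC => ?_⟩
  · rw [Matroid.restrict_ground_eq]; exact ⟨e, heS⟩
  · rw [Matroid.restrict_ground_eq]
    intro a ha b hb hab
    have hconn : Conn M a b := conn_trans hE ha.2.symm hb.2
    rcases hconn with rfl | ⟨C, hC, haC, hbC⟩
    · exact absurd rfl hab
    have hCS : C ⊆ S := hclosed C hC (Set.not_disjoint_iff.2 ⟨a, haC, ha⟩)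
    exact ⟨C, (restrict_mcircuit_iff hSE).2 ⟨hC, hCS⟩, haC, hbC⟩
  · by_cases hdis : Disjoint C S
    · exact Or.inr hdis
    · exact Or.inl (hclosed C hC hdis)

lemma component_eq_of_not_disjoint {M : Matroid α} {S S' : Set α}
    (hS : IsComponent M S) (hS' : IsComponent M S') (h : ¬ Disjoint S S') : S = S' := by
  obtain ⟨x, hxS, hxS'⟩ := Set.not_disjoint_iff.1 h
  have key : ∀ T T' : Set α, IsComponent M T → IsComponent M T' →
      x ∈ T → x ∈ T' → T ⊆ T' := by
    intro T T' hT hT' hxT hxT' y hyT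
    by_cases hxy : x = y
    · exact hxy ▸ hxT'
    obtain ⟨C, hC, hxC, hyC⟩ := hT.2.2.1.2 x (by rwa [Matroid.restrict_ground_eq]) y
      (by rwa [Matroid.restrict_ground_eq]) hxy
    have hCM : MCircuit M C := ((restrict_mcircuit_iff hT.1).1 hC).1
    rcases hT'.2.2.2 C hCM with hsub | hdis
    · exact hsub hyC
    · exact absurd hxT' (fun hmem => (Set.disjoint_left.1 hdis) hxC hmem)
  exact (key S S' hS hS' hxS hxS').antisymm (key S' S hS' hS hxS' hxS)







lemma unif_facts {P : Matroid α} {m : ℕ} (hm : 1 ≤ m) (h : IsUnifNearCircuit P m) :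
    P.E.Finite ∧ MCircuit P P.E ∧ ∀ C, MCircuit P C → C = P.E := by
  have hfin : P.E.Finite := by
    by_contra hinf
    have := Set.Infinite.ncard (fun hf => hinf hf)
    rw [h.1] at this
    omega
  have hdepE : ¬ P.Indep P.E := by
    rw [h.2]
    rintro ⟨-, hle⟩
    rw [h.1] at hle
    omega
  refine ⟨hfin, ⟨hdepE, Subset.rfl, fun D hD => ?_⟩, fun C hC => ?_⟩
  · rw [h.2]
    have hlt := Set.ncard_lt_ncard hD hfin
    rw [h.1] at hlt
    exact ⟨hD.subset, by omega⟩
  · have hsub : C ⊆ P.E := hC.2.1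
    have hgt : m < C.ncard := by
      by_contra hle
      exact hC.1 ((h.2 C).2 ⟨hsub, by omega⟩)
    refine Set.eq_of_subset_of_ncard_le hsub ?_ hfin
    rw [h.1]
    omega

lemma exists_injOn_nat {S : Set α} (hS : S.Finite) : ∃ f : α → ℕ, Set.InjOn f S :=
  Set.countable_iff_exists_injOn.1 hS.countable

lemma exists_bound {S : Set α} (hS : S.Finite) (f : α → ℕ) : ∃ B, ∀ x ∈ S, f x ≤ B := by
  obtain ⟨B, hB⟩ := (hS.image f).bddAbove
  exact ⟨B, fun x hx => hB (Set.mem_image_of_mem f hx)⟩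

/-- The per-component data we construct by induction. -/
def GoodData (N : Matroid α) (f : α → ℕ) (𝒟 : Set (Set α)) : Prop :=
  Set.InjOn f N.E ∧
  (∀ D ∈ 𝒟, ∃ C e, MCircuit N C ∧ e ∈ C ∧ (∀ x ∈ C, x ≠ e → f e < f x) ∧ D = C \ {e}) ∧
  (∀ D ∈ 𝒟, ∀ D' ∈ 𝒟, D ≠ D' → Disjoint D D') ∧
  (∀ C e, MCircuit N C → e ∈ C → (∀ x ∈ C, x ≠ e → f e < f x) → ∃ D ∈ 𝒟, D ⊆ C \ {e})


lemma main_induction {M : Matroid α} (h : IsIterParallelUnif M) :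
    M.E.Finite ∧ ∃ f 𝒟, GoodData M f 𝒟 := by
  classical
  induction h with
  | unif M m h2 h =>
    obtain ⟨hfin, hcirc, huniq⟩ := unif_facts (by omega) h
    obtain ⟨f, hf⟩ := exists_injOn_nat hfin
    have hne : M.E.Nonempty := hcirc.nonempty
    obtain ⟨e, heE, hemin⟩ := Set.exists_min_image M.E f hfin hne
    have hleast : ∀ x ∈ M.E, x ≠ e → f e < f x := by
      intro x hx hxe
      exact lt_of_le_of_ne (hemin x hx) (fun hfe => hxe (hf hx heE hfe.symm))
    refine ⟨hfin, f, {M.E \ {e}}, hf, ?_, ?_, ?_⟩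
    · rintro D rfl
      exact ⟨M.E, e, hcirc, heE, hleast, rfl⟩
    · rintro D rfl D' rfl hne'
      exact absurd rfl hne'
    · intro C e₁ hC he₁ hmin₁
      have hCE : C = M.E := huniq C hC
      subst hCE
      have hee : e₁ = e := by
        by_contra hne'
        exact absurd (hleast e₁ he₁ hne') (not_lt.2 (le_of_lt (hmin₁ e heE (fun h => hne' h.symm))))
      subst hee
      exact ⟨M.E \ {e₁}, rfl, Subset.rfl⟩
  | parallel M N P e m h2 hN hP h ihN =>
    obtain ⟨hNfin, f', 𝒟', hinj', hbc', hdis', hcov'⟩ := ihN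
    obtain ⟨hPfin, hPcirc, hPuniq⟩ := unif_facts (by omega) hP
    obtain ⟨hinter, hunion, hl1, hc1, hl2, hc2, hcircs⟩ := h
    have heN : e ∈ N.E := by
      have : e ∈ N.E ∩ P.E := hinter ▸ rfl
      exact this.1
    have heP : e ∈ P.E := by
      have : e ∈ N.E ∩ P.E := hinter ▸ rfl
      exact this.2
    have hMfin : M.E.Finite := by rw [hunion]; exact hNfin.union hPfin
    obtain ⟨B, hB⟩ := exists_bound hNfin f'
    obtain ⟨g, hg⟩ := exists_injOn_nat hPfin
    set f : α → ℕ := fun x => if x ∈ N.E then f' x else B + 1 + g x with hfdef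
    -- basic facts about f
    have hfN : ∀ x ∈ N.E, f x = f' x := by
      intro x hx
      simp only [hfdef, if_pos hx]
    have hPnotN : ∀ x ∈ P.E, x ≠ e → x ∉ N.E := by
      intro x hx hxe hxN
      exact hxe (by have : x ∈ N.E ∩ P.E := ⟨hxN, hx⟩; rwa [hinter] at this)
    have hfP : ∀ x ∈ P.E, x ≠ e → f x = B + 1 + g x := by
      intro x hx hxe
      simp only [hfdef, if_neg (hPnotN x hx hxe)]
    have hfPbig : ∀ x ∈ P.E, x ≠ e → B < f x := by
      intro x hx hxe
      rw [hfP x hx hxe]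
      omega
    have hinj : Set.InjOn f M.E := by
      rw [hunion]
      rintro a (haN | haP) b (hbN | hbP) hab
      · exact hinj' haN hbN (by rwa [hfN a haN, hfN b hbN] at hab)
      · by_cases hbe : b = e
        · exact hinj' haN (hbe ▸ heN) (by rwa [hfN a haN, hfN b (hbe ▸ heN)] at hab)
        · exact absurd hab (by
            have h1 : f a ≤ B := (hfN a haN) ▸ hB a haN
            have h2 : B < f b := hfPbig b hbP hbe
            omega)
      · by_cases hae : a = e
        · exact hinj' (hae ▸ heN) hbN (by rwa [hfN a (hae ▸ heN), hfN b hbN] at hab)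
        · exact absurd hab (by
            have h1 : f b ≤ B := (hfN b hbN) ▸ hB b hbN
            have h2 : B < f a := hfPbig a haP hae
            omega)
      · by_cases hae : a = e
        · by_cases hbe : b = e
          · rw [hae, hbe]
          · exact absurd hab (by
              have h1 : f a ≤ B := (hfN a (hae ▸ heN)) ▸ hB a (hae ▸ heN)
              have h2 : B < f b := hfPbig b hbP hbe
              omega)
        · by_cases hbe : b = e
          · exact absurd hab (by
              have h1 : f b ≤ B := (hfN b (hbe ▸ heN)) ▸ hB b (hbe ▸ heN)
              have h2 : B < f a := hfPbig a haP hae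
              omega)
          · refine hg haP hbP ?_
            rw [hfP a haP hae, hfP b hbP hbe] at hab
            omega
    -- the new designated broken circuit
    have hPcircM : MCircuit M P.E := (hcircs P.E).2 (Or.inr (Or.inl hPcirc))
    have hePleast : ∀ x ∈ P.E, x ≠ e → f e < f x := by
      intro x hx hxe
      have h1 : f e ≤ B := (hfN e heN) ▸ hB e heN
      have h2 : B < f x := hfPbig x hx hxe
      omega
    set D₀ : Set α := P.E \ {e} with hD₀
    -- broken circuits of N are broken circuits of M with the same data
    refine ⟨hMfin, f, insert D₀ 𝒟', hinj, ?_, ?_, ?_⟩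
    · rintro D (rfl | hD)
      · exact ⟨P.E, e, hPcircM, heP, hePleast, rfl⟩
      · obtain ⟨C, e', hC, he', hmin, rfl⟩ := hbc' D hD
        refine ⟨C, e', (hcircs C).2 (Or.inl hC), he', ?_, rfl⟩
        intro x hx hxe
        rw [hfN x (hC.2.1 hx), hfN e' (hC.2.1 he')]
        exact hmin x hx hxe
    · have hsubN : ∀ D ∈ 𝒟', D ⊆ N.E := by
        intro D hD
        obtain ⟨C, e', hC, -, -, rfl⟩ := hbc' D hD
        exact (diff_subset).trans hC.2.1
      have hdisD₀ : ∀ D ∈ 𝒟', Disjoint D₀ D := by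
        intro D hD
        rw [Set.disjoint_left]
        rintro x ⟨hxP, hxe⟩ hxD
        exact hPnotN x hxP hxe (hsubN D hD hxD)
      rintro D (rfl | hD) D' (rfl | hD') hne'
      · exact absurd rfl hne'
      · exact hdisD₀ D' hD'
      · exact (hdisD₀ D hD).symm
      · exact hdis' D hD D' hD' hne'
    · intro C e₁ hC he₁ hmin₁
      rcases (hcircs C).1 hC with hCN | hCP | ⟨C₁, C₂, hC₁, hC₂, heC₁, heC₂, rfl⟩
      · -- circuit of N
        obtain ⟨D, hD, hDsub⟩ := hcov' C e₁ hCN he₁ (by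
          intro x hx hxe
          rw [← hfN x (hCN.2.1 hx), ← hfN e₁ (hCN.2.1 he₁)]
          exact hmin₁ x hx hxe)
        exact ⟨D, Or.inr hD, hDsub⟩
      · -- circuit of P : C = P.E
        have hCE : C = P.E := hPuniq C hCP
        subst hCE
        have hee : e₁ = e := by
          by_contra hne'
          exact absurd (hePleast e₁ he₁ hne')
            (not_lt.2 (le_of_lt (hmin₁ e heP (fun hh => hne' hh.symm))))
        subst hee
        exact ⟨D₀, Or.inl rfl, Subset.rfl⟩
      · -- mixed circuit
        have hC₂E : C₂ = P.E := hPuniq C₂ hC₂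
        subst hC₂E
        -- find y ∈ C₁ distinct from e
        have hC₁ne : C₁ ≠ {e} := by
          rintro rfl
          exact hl1 ⟨heN, hC₁.1⟩
        obtain ⟨y, hyC₁, hye⟩ : ∃ y, y ∈ C₁ ∧ y ≠ e := by
          by_contra hcon
          push_neg at hcon
          refine hC₁ne (Subset.antisymm (fun z hz => hcon z hz) (by simpa using heC₁))
        have hyC : y ∈ (C₁ ∪ P.E) \ {e} := ⟨Or.inl hyC₁, hye⟩
        have hD₀sub : D₀ ⊆ (C₁ ∪ P.E) \ {e} := fun z hz => ⟨Or.inr hz.1, hz.2⟩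
        refine ⟨D₀, Or.inl rfl, fun z hz => ⟨hD₀sub hz, ?_⟩⟩
        -- z ≠ e₁ : otherwise e₁ ∈ D₀ has f-value > B, but y has value ≤ B
        intro hze
        rw [mem_singleton_iff] at hze
        have hyN : y ∈ N.E := hC₁.2.1 hyC₁
        have hyB : f y ≤ B := (hfN y hyN) ▸ hB y hyN
        have hzB : B < f z := hfPbig z hz.1 hz.2
        have hyz : y ≠ e₁ := by
          intro hh
          rw [hh, ← hze] at hyB
          omega
        have := hmin₁ y hyC hyz
        rw [← hze] at this
        omega

/-- From any `ℕ ×ₗ ℕ`-valued labelling we get a linear order refining it. -/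
lemma exists_linear_order (w : α → Lex (ℕ × ℕ)) :
    ∃ r : α → α → Prop, IsLinearOrder α r ∧ (∀ a, r a a) ∧
      (∀ a b, w a < w b → r a b) ∧ (∀ a b, r a b → w a ≤ w b) := by
  classical
  set r : α → α → Prop := fun a b => w a < w b ∨ (w a = w b ∧ (WellOrderingRel a b ∨ a = b))
    with hr
  have hrefl : ∀ a, r a a := fun a => Or.inr ⟨rfl, Or.inr rfl⟩
  have htrans : ∀ a b c, r a b → r b c → r a c := by
    rintro a b c (hab | ⟨hab, hab'⟩) (hbc | ⟨hbc, hbc'⟩)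
    · exact Or.inl (hab.trans hbc)
    · exact Or.inl (hbc ▸ hab)
    · exact Or.inl (hab ▸ hbc)
    · refine Or.inr ⟨hab.trans hbc, ?_⟩
      rcases hab' with h1 | rfl
      · rcases hbc' with h2 | rfl
        · exact Or.inl (IsTrans.trans _ _ _ h1 h2)
        · exact Or.inl h1
      · exact hbc'
  have hanti : ∀ a b, r a b → r b a → a = b := by
    rintro a b (hab | ⟨hab, hab'⟩) (hba | ⟨hba, hba'⟩)
    · exact absurd hba (lt_asymm hab)
    · exact absurd hab (hba ▸ lt_irrefl _)
    · exact absurd hba (hab ▸ lt_irrefl _)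
    · rcases hab' with h1 | rfl
      · rcases hba' with h2 | rfl
        · exact absurd h2 (Std.Asymm.asymm _ _ h1)
        · rfl
      · rfl
  have htotal : ∀ a b, r a b ∨ r b a := by
    intro a b
    rcases lt_trichotomy (w a) (w b) with h | h | h
    · exact Or.inl (Or.inl h)
    · rcases (trichotomous_of WellOrderingRel a b : WellOrderingRel a b ∨ a = b ∨ WellOrderingRel b a) with h' | rfl | h'
      · exact Or.inl (Or.inr ⟨h, Or.inl h'⟩)
      · exact Or.inl (hrefl a)
      · exact Or.inr (Or.inr ⟨h.symm, Or.inl h'⟩)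
    · exact Or.inr (Or.inl h)
  have hlin : IsLinearOrder α r :=
    { refl := hrefl, trans := htrans, antisymm := hanti, total := htotal }
  refine ⟨r, hlin, hrefl, fun a b h => Or.inl h, ?_⟩
  rintro a b (h | ⟨h, -⟩)
  · exact le_of_lt h
  · exact le_of_eq h

/-- if every component of a simple matroid is a coloop or an
iterated parallel connection of `U_{m,m+1}`'s, then for some linear ordering the
minimal broken circuits are pairwise disjoint (complete intersection). -/
theorem exists_order_completeIntersection {α : Type*} (M : Matroid α)
    (hfin : M.E.Finite) (hsimple : MSimple M)
    (hcomp : ∀ S, IsComponent M S →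
      (∃ e, S = {e} ∧ MColoop M e) ∨ IsIterParallelUnif (M ↾ S)) :
    ∃ r : α → α → Prop, IsLinearOrder α r ∧
      ∀ B B', MinBrokenCircuit r M B → MinBrokenCircuit r M B' → B ≠ B' →
        Disjoint B B' := by
  classical
  -- the connected component containing x
  set Sx : α → Set α := fun x => {f | f ∈ M.E ∧ Conn M x f} with hSxdef
  obtain ⟨ι, hι⟩ := exists_injOn_nat hfin.finite_subsets
  -- choose the per-component data
  have hdata : ∀ S : Set α, ∃ (f : α → ℕ) (𝒟 : Set (Set α)),
      IsIterParallelUnif (M ↾ S) → GoodData (M ↾ S) f 𝒟 := by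
    intro S
    by_cases h : IsIterParallelUnif (M ↾ S)
    · obtain ⟨f, 𝒟, hf⟩ := (main_induction h).2
      exact ⟨f, 𝒟, fun _ => hf⟩
    · exact ⟨fun _ => 0, ∅, fun h' => absurd h' h⟩
  choose F DD hFD using hdata
  set w : α → Lex (ℕ × ℕ) := fun x => toLex (ι (Sx x), F (Sx x) x) with hw
  obtain ⟨r, hlin, hrefl, hwr, hrw⟩ := exists_linear_order w
  refine ⟨r, hlin, ?_⟩
  -- the component of any point of a component is the component itself
  have hSxcomp : ∀ S, IsComponent M S → ∀ x ∈ S, Sx x = S := by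
    intro S hS x hxS
    apply Subset.antisymm
    · rintro z ⟨hzE, hconn⟩
      rcases hconn with rfl | ⟨C, hC, hxC, hzC⟩
      · exact hxS
      · rcases hS.2.2.2 C hC with hsub | hdis
        · exact hsub hzC
        · exact absurd hxS (Set.disjoint_left.1 hdis hxC)
    · intro y hyS
      by_cases hxy : x = y
      · exact hxy ▸ ⟨hS.1 hxS, Or.inl rfl⟩
      · obtain ⟨C, hC, hxC, hyC⟩ := hS.2.2.1.2 x (by rwa [Matroid.restrict_ground_eq]) y
          (by rwa [Matroid.restrict_ground_eq]) hxy
        have hCM := (restrict_mcircuit_iff hS.1).1 hC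
        exact ⟨hS.1 hyS, Or.inr ⟨C, hCM.1, hxC, hyC⟩⟩
  -- comparing w-values within a component
  have hwlt : ∀ S, IsComponent M S → ∀ x ∈ S, ∀ y ∈ S, (w x < w y ↔ F S x < F S y) := by
    intro S hS x hx y hy
    rw [hw]
    simp only
    rw [hSxcomp S hS x hx, hSxcomp S hS y hy, Prod.Lex.lt_iff]
    constructor
    · rintro (h | ⟨-, h⟩)
      · exact absurd h (lt_irrefl _)
      · exact h
    · exact fun h => Or.inr ⟨rfl, h⟩
  -- the designated family of broken circuits
  set 𝒟star : Set (Set α) := {D | ∃ S, IsComponent M S ∧ IsIterParallelUnif (M ↾ S) ∧ D ∈ DD S}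
    with h𝒟star
  -- each member of the family is a broken circuit contained in its component
  have hbroken : ∀ S, IsComponent M S → (hit : IsIterParallelUnif (M ↾ S)) →
      ∀ D ∈ DD S, BrokenCircuit r M D ∧ D ⊆ S := by
    intro S hS hit D hD
    obtain ⟨C', e', hC', he', hminf, rfl⟩ := (hFD S hit).2.1 D hD
    have hC'M := (restrict_mcircuit_iff hS.1).1 hC'
    have hC'S : C' ⊆ S := hC'M.2
    refine ⟨⟨C', e', hC'M.1, he', ?_, rfl⟩, (diff_subset).trans hC'S⟩
    intro x hx
    by_cases hxe : x = e'
    · exact hxe ▸ hrefl x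
    · refine hwr _ _ ?_
      rw [hwlt S hS e' (hC'S he') x (hC'S hx)]
      exact hminf x hx (fun hh => hxe hh)
  -- every broken circuit contains a member of the family
  have hcover : ∀ B, BrokenCircuit r M B → ∃ D ∈ 𝒟star, D ⊆ B := by
    rintro B ⟨C, e, hC, heC, hleast, rfl⟩
    set S : Set α := Sx e with hSdef
    have hScomp : IsComponent M S := isComponent_class hfin hC heC
    have heS : e ∈ S := ⟨hC.2.1 heC, Or.inl rfl⟩
    have hCS : C ⊆ S := by
      rcases hScomp.2.2.2 C hC with hsub | hdis
      · exact hsub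
      · exact absurd heS (Set.disjoint_left.1 hdis heC)
    rcases hcomp S hScomp with ⟨a, hSa, -⟩ | hit
    · -- a singleton component cannot contain a circuit of a simple matroid
      exfalso
      have hCa : C = {a} := by
        rcases Set.subset_singleton_iff_eq.1 (hSa ▸ hCS) with h | h
        · exact absurd h (Set.nonempty_iff_ne_empty.1 hC.nonempty)
        · exact h
      have := hsimple C hC
      rw [hCa, Set.ncard_singleton] at this
      omega
    · have hCres : MCircuit (M ↾ S) C := (restrict_mcircuit_iff hScomp.1).2 ⟨hC, hCS⟩
      have hminf : ∀ x ∈ C, x ≠ e → F S e < F S x := by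
        intro x hx hxe
        have h1 : w e ≤ w x := hrw e x (hleast x hx)
        rcases lt_trichotomy (F S e) (F S x) with h | h | h
        · exact h
        · have heq : e = x := (hFD S hit).1
            (show e ∈ (M ↾ S).E by rw [Matroid.restrict_ground_eq]; exact hCS heC)
            (show x ∈ (M ↾ S).E by rw [Matroid.restrict_ground_eq]; exact hCS hx) h
          exact absurd heq.symm hxe
        · exact absurd ((hwlt S hScomp x (hCS hx) e (hCS heC)).2 h) (not_lt.2 h1)
      obtain ⟨D, hD, hDsub⟩ := (hFD S hit).2.2.2 C e hCres heC hminf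
      exact ⟨D, ⟨S, hScomp, hit, hD⟩, hDsub⟩
  -- members of the family are pairwise disjoint
  have hpair : ∀ D ∈ 𝒟star, ∀ D' ∈ 𝒟star, D ≠ D' → Disjoint D D' := by
    rintro D ⟨S, hS, hit, hD⟩ D' ⟨S', hS', hit', hD'⟩ hne
    by_cases hSS : S = S'
    · subst hSS
      exact (hFD S hit).2.2.1 D hD D' hD' hne
    · have hdis : Disjoint S S' := by
        by_contra hcon
        exact hSS (component_eq_of_not_disjoint hS hS' hcon)
      exact hdis.mono ((hbroken S hS hit D hD).2) ((hbroken S' hS' hit' D' hD').2)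
  -- conclusion
  intro B B' hB hB' hne
  obtain ⟨D, hDmem, hDsub⟩ := hcover B hB.1
  obtain ⟨S, hS, hit, hDD⟩ := hDmem
  have hDB : D = B := hB.2 D (hbroken S hS hit D hDD).1 hDsub
  obtain ⟨D', hDmem', hDsub'⟩ := hcover B' hB'.1
  obtain ⟨S', hS', hit', hDD'⟩ := hDmem'
  have hDB' : D' = B' := hB'.2 D' (hbroken S' hS' hit' D' hDD').1 hDsub'
  rw [← hDB, ← hDB']
  exact hpair D ⟨S, hS, hit, hDD⟩ D' ⟨S', hS', hit', hDD'⟩ (by rw [hDB, hDB']; exact hne)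
end PaperBC
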